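/- arXiv:math/0503691 — 2 statements merged into one kernel-verified Lean document; each statement's English description precedes it below -/
import Mathlib

section
/- Let A be a 3×3 real symmetric matrix whose distortion values satisfy ε_{i,j} > 0 for all i ≠ j (the induced subdivision of the Newton triangle of the corresponding tropical conic is minimal in nodes). Then A is never regular in the duality sense: there exists no λ ∈ ℝ such that (A**)_{i,j} = λ + a_{i,j} for all i, j, where A* is the tropical adjoint of A and A** is the tropical adjoint of A*. -/
/-- The tropical determinant of an `m × m` real matrix: the maximum over all
permutations `σ` of `∑ k, M k (σ k)`. -/
noncomputable def tropDet {m : ℕ} (M : Matrix (Fin m) (Fin m) ℝ) : ℝ :=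
  Finset.univ.sup' Finset.univ_nonempty fun σ : Equiv.Perm (Fin m) => ∑ k, M k (σ k)

/-- The `(i,j)`-tropical minor: the tropical determinant of the submatrix obtained
by deleting row `i` and column `j`. -/
noncomputable def tropMinor {n : ℕ} (M : Matrix (Fin (n + 1)) (Fin (n + 1)) ℝ)
    (i j : Fin (n + 1)) : ℝ :=
  tropDet (M.submatrix i.succAbove j.succAbove)

/-- The tropical adjoint of a matrix: entries are the tropical minors. -/
noncomputable def tropAdj {n : ℕ} (M : Matrix (Fin (n + 1)) (Fin (n + 1)) ℝ) :
    Matrix (Fin (n + 1)) (Fin (n + 1)) ℝ :=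
  fun i j => tropMinor M i j

lemma le_tropDet {m : ℕ} (M : Matrix (Fin m) (Fin m) ℝ) (σ : Equiv.Perm (Fin m)) :
    ∑ k, M k (σ k) ≤ tropDet M :=
  Finset.le_sup' (fun σ : Equiv.Perm (Fin m) => ∑ k, M k (σ k)) (Finset.mem_univ σ)

lemma tropDet2 (M : Matrix (Fin 2) (Fin 2) ℝ) :
    tropDet M = max (M 0 0 + M 1 1) (M 0 1 + M 1 0) := by
  have hperm : ∀ σ : Equiv.Perm (Fin 2), σ = 1 ∨ σ = Equiv.swap 0 1 := by decide
  apply le_antisymm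
  · apply Finset.sup'_le
    intro σ _
    rcases hperm σ with h | h <;> subst h <;>
      simp [Fin.sum_univ_two, Equiv.swap_apply_left, Equiv.swap_apply_right,
        le_max_left, le_max_right]
  · apply max_le
    · have h1 : M 0 0 + M 1 1 = ∑ k, M k ((1 : Equiv.Perm (Fin 2)) k) := by
        simp [Fin.sum_univ_two]
      exact h1 ▸ le_tropDet M 1
    · have h1 : M 0 1 + M 1 0 = ∑ k, M k (Equiv.swap (0:Fin 2) 1 k) := by
        simp [Fin.sum_univ_two]
      exact h1 ▸ le_tropDet M (Equiv.swap 0 1)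

lemma tropAdj_apply3 (A : Matrix (Fin 3) (Fin 3) ℝ) (i j : Fin 3) :
    tropAdj A i j = max (A (i.succAbove 0) (j.succAbove 0) + A (i.succAbove 1) (j.succAbove 1))
      (A (i.succAbove 0) (j.succAbove 1) + A (i.succAbove 1) (j.succAbove 0)) := by
  unfold tropAdj tropMinor
  rw [tropDet2]
  rfl

/-- A `3 × 3` real symmetric matrix with positive off-diagonal distortion values
(the induced subdivision is minimal in nodes) is never regular in the duality
sense. -/
theorem not_regular_of_positive_distortion (A : Matrix (Fin 3) (Fin 3) ℝ)
    (hsym : A.IsSymm)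
    (hpos : ∀ i j : Fin 3, i ≠ j → 0 < A i j - (A i i + A j j) / 2) :
    ¬ ∃ lam : ℝ, ∀ i j : Fin 3, tropAdj (tropAdj A) i j = lam + A i j := by
  rintro ⟨lam, hlam⟩
  set a := A 0 0 with ha
  set b := A 1 1 with hb
  set c := A 2 2 with hc
  set d := A 0 1 with hd
  set e := A 0 2 with he
  set f := A 1 2 with hf
  have s10 : A 1 0 = d := hsym.apply 0 1
  have s20 : A 2 0 = e := hsym.apply 0 2
  have s21 : A 2 1 = f := hsym.apply 1 2
  have hp : a + b < 2 * d := by have := hpos 0 1 (by decide); linarith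
  have hq : a + c < 2 * e := by have := hpos 0 2 (by decide); linarith
  have hr : b + c < 2 * f := by have := hpos 1 2 (by decide); linarith
  set B := tropAdj A with hB
  have B00 : B 0 0 = f + f := by
    rw [hB, tropAdj_apply3]
    simp only [show (0:Fin 3).succAbove 0 = 1 from rfl, show (0:Fin 3).succAbove 1 = 2 from rfl,
      s21, ← hb, ← hc, ← hf]
    exact max_eq_right (by linarith)
  have B11 : B 1 1 = e + e := by
    rw [hB, tropAdj_apply3]
    simp only [show (1:Fin 3).succAbove 0 = 0 from rfl, show (1:Fin 3).succAbove 1 = 2 from rfl,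
      s20, ← ha, ← hc, ← he]
    exact max_eq_right (by linarith)
  have B22 : B 2 2 = d + d := by
    rw [hB, tropAdj_apply3]
    simp only [show (2:Fin 3).succAbove 0 = 0 from rfl, show (2:Fin 3).succAbove 1 = 1 from rfl,
      s10, ← ha, ← hb, ← hd]
    exact max_eq_right (by linarith)
  have B01 : B 0 1 = max (d + c) (f + e) := by
    rw [hB, tropAdj_apply3]
    simp only [show (0:Fin 3).succAbove 0 = 1 from rfl, show (0:Fin 3).succAbove 1 = 2 from rfl,
      show (1:Fin 3).succAbove 0 = 0 from rfl, show (1:Fin 3).succAbove 1 = 2 from rfl,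
      s10, s20, s21, ← hc, ← hd, ← he, ← hf]
  have B10 : B 1 0 = max (d + c) (e + f) := by
    rw [hB, tropAdj_apply3]
    simp only [show (0:Fin 3).succAbove 0 = 1 from rfl, show (0:Fin 3).succAbove 1 = 2 from rfl,
      show (1:Fin 3).succAbove 0 = 0 from rfl, show (1:Fin 3).succAbove 1 = 2 from rfl,
      s10, s20, s21, ← hc, ← hd, ← he, ← hf]
  have B02 : B 0 2 = max (d + f) (b + e) := by
    rw [hB, tropAdj_apply3]
    simp only [show (0:Fin 3).succAbove 0 = 1 from rfl, show (0:Fin 3).succAbove 1 = 2 from rfl,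
      show (2:Fin 3).succAbove 0 = 0 from rfl, show (2:Fin 3).succAbove 1 = 1 from rfl,
      s10, s20, s21, ← hb, ← hd, ← he, ← hf]
  have B20 : B 2 0 = max (d + f) (e + b) := by
    rw [hB, tropAdj_apply3]
    simp only [show (0:Fin 3).succAbove 0 = 1 from rfl, show (0:Fin 3).succAbove 1 = 2 from rfl,
      show (2:Fin 3).succAbove 0 = 0 from rfl, show (2:Fin 3).succAbove 1 = 1 from rfl,
      s10, s20, s21, ← hb, ← hd, ← he, ← hf]
  have B12 : B 1 2 = max (a + f) (d + e) := by
    rw [hB, tropAdj_apply3]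
    simp only [show (1:Fin 3).succAbove 0 = 0 from rfl, show (1:Fin 3).succAbove 1 = 2 from rfl,
      show (2:Fin 3).succAbove 0 = 0 from rfl, show (2:Fin 3).succAbove 1 = 1 from rfl,
      s10, s20, s21, ← ha, ← hd, ← he, ← hf]
  have B21 : B 2 1 = max (a + f) (e + d) := by
    rw [hB, tropAdj_apply3]
    simp only [show (1:Fin 3).succAbove 0 = 0 from rfl, show (1:Fin 3).succAbove 1 = 2 from rfl,
      show (2:Fin 3).succAbove 0 = 0 from rfl, show (2:Fin 3).succAbove 1 = 1 from rfl,
      s10, s20, s21, ← ha, ← hd, ← he, ← hf]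
  -- the four equations from the regularity hypothesis
  have E0 : max (e + e + (d + d)) (max (a + f) (d + e) + max (a + f) (e + d)) = lam + a := by
    have := hlam 0 0
    rw [tropAdj_apply3] at this
    simpa only [show (0:Fin 3).succAbove 0 = 1 from rfl, show (0:Fin 3).succAbove 1 = 2 from rfl,
      B11, B22, B12, B21] using this
  have E1 : max (f + f + (d + d)) (max (d + f) (b + e) + max (d + f) (e + b)) = lam + b := by
    have := hlam 1 1
    rw [tropAdj_apply3] at this
    simpa only [show (1:Fin 3).succAbove 0 = 0 from rfl, show (1:Fin 3).succAbove 1 = 2 from rfl,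
      B00, B22, B02, B20] using this
  have E2 : max (f + f + (e + e)) (max (d + c) (f + e) + max (d + c) (e + f)) = lam + c := by
    have := hlam 2 2
    rw [tropAdj_apply3] at this
    simpa only [show (2:Fin 3).succAbove 0 = 0 from rfl, show (2:Fin 3).succAbove 1 = 1 from rfl,
      B00, B11, B01, B10] using this
  have E3 : max (max (d + c) (e + f) + (d + d)) (max (a + f) (d + e) + max (d + f) (e + b)) = lam + d := by
    have := hlam 0 1
    rw [tropAdj_apply3] at this
    simpa only [show (0:Fin 3).succAbove 0 = 1 from rfl, show (0:Fin 3).succAbove 1 = 2 from rfl,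
      show (1:Fin 3).succAbove 0 = 0 from rfl, show (1:Fin 3).succAbove 1 = 2 from rfl,
      B10, B22, B12, B20] using this
  -- now pure max/linear arithmetic
  have c1 : max (d + c) (f + e) = max (d + c) (e + f) := by rw [add_comm f e]
  have c2 : max (a + f) (e + d) = max (a + f) (d + e) := by rw [add_comm e d]
  have c3 : max (d + f) (e + b) = max (d + f) (b + e) := by rw [add_comm e b]
  rw [c2] at E0
  rw [c3] at E1
  rw [c1] at E2
  rw [c3] at E3
  set X := max (d + c) (e + f) with hXdef
  set Y := max (d + f) (b + e) with hYdef
  set Z := max (a + f) (d + e) with hZdef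
  have lX : e + f ≤ X := le_max_right _ _
  have lZ : d + e ≤ Z := le_max_right _ _
  have lY : d + f ≤ Y := le_max_left _ _
  have hZ2 : Z + Z = lam + a := by
    rw [max_eq_right (by linarith : e + e + (d + d) ≤ Z + Z)] at E0; exact E0
  have hY2 : Y + Y = lam + b := by
    rw [max_eq_right (by linarith : f + f + (d + d) ≤ Y + Y)] at E1; exact E1
  have hX2 : X + X = lam + c := by
    rw [max_eq_right (by linarith : f + f + (e + e) ≤ X + X)] at E2; exact E2
  rcases max_cases (X + (d + d)) (Z + Y) with ⟨m, _⟩ | ⟨m, m'⟩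
  · -- max = X + 2d, so X = lam - d
    rw [m] at E3
    rcases max_cases (a + f) (d + e) with ⟨mz, _⟩ | ⟨mz, _⟩ <;>
    rcases max_cases (d + f) (b + e) with ⟨my, _⟩ | ⟨my, _⟩ <;> linarith
  · rw [m] at E3; linarith
end

section
/- Let m ≥ 2 and let A be an m×m real symmetric matrix satisfying 2·a_{i,j} < a_{i,i} + a_{j,j} for all i ≠ j, and let A* be the tropical adjoint of A. Then the lifting constant of the double dual is (m−2) times the trace: for every index i, tropMinor(A*, i, i) = a_{i,i} + (m−2)·(∑_l a_{l,l}). -/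
/-- The strict concave diagonal dominance condition. -/
def TropCond {m : ℕ} (M : Matrix (Fin m) (Fin m) ℝ) : Prop :=
  ∀ i j, i ≠ j → 2 * M i j < M i i + M j j

lemma perm_sum_le {m : ℕ} {M : Matrix (Fin m) (Fin m) ℝ} (hM : TropCond M)
    (σ : Equiv.Perm (Fin m)) : ∑ k, M k (σ k) ≤ ∑ k, M k k := by
  have h2 : ∑ k, (2 * M k (σ k)) ≤ ∑ k, (M k k + M (σ k) (σ k)) := by
    apply Finset.sum_le_sum
    intro k _
    rcases eq_or_ne (σ k) k with hk | hk
    · rw [hk]; linarith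
    · exact (hM k (σ k) (Ne.symm hk)).le
  have h3 : ∑ k, M (σ k) (σ k) = ∑ k, M k k :=
    Equiv.sum_comp σ (fun k => M k k)
  rw [Finset.sum_add_distrib, h3, ← Finset.mul_sum] at h2
  linarith

lemma tropDet_eq_trace {m : ℕ} {M : Matrix (Fin m) (Fin m) ℝ} (hM : TropCond M) :
    tropDet M = ∑ k, M k k := by
  apply le_antisymm
  · exact Finset.sup'_le _ _ fun σ _ => perm_sum_le hM σ
  · have := Finset.le_sup' (f := fun σ : Equiv.Perm (Fin m) => ∑ k, M k (σ k))
      (Finset.mem_univ (1 : Equiv.Perm (Fin m)))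
    exact le_of_eq_of_le (by simp) this

lemma tropCond_submatrix {m k : ℕ} {M : Matrix (Fin m) (Fin m) ℝ} (hM : TropCond M)
    {f : Fin k → Fin m} (hf : Function.Injective f) :
    TropCond (M.submatrix f f) :=
  fun i j hij => hM (f i) (f j) fun hfe => hij (hf hfe)

lemma sum_succAbove_diag {n : ℕ} (M : Matrix (Fin (n + 1)) (Fin (n + 1)) ℝ)
    (i : Fin (n + 1)) :
    ∑ p, M (i.succAbove p) (i.succAbove p) = (∑ k, M k k) - M i i := by
  have := Fin.sum_univ_succAbove (fun k => M k k) i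
  linarith

lemma tropMinor_diag {n : ℕ} {M : Matrix (Fin (n + 1)) (Fin (n + 1)) ℝ}
    (hM : TropCond M) (i : Fin (n + 1)) :
    tropMinor M i i = (∑ k, M k k) - M i i := by
  have h := tropDet_eq_trace (tropCond_submatrix hM (Fin.succAbove_right_injective (p := i)))
  rw [tropMinor, h]
  exact sum_succAbove_diag M i

lemma tropMinor_lt {n : ℕ} {M : Matrix (Fin (n + 1)) (Fin (n + 1)) ℝ}
    (hM : TropCond M) {i j : Fin (n + 1)} (hij : i ≠ j) :
    2 * tropMinor M i j < ((∑ k, M k k) - M i i) + ((∑ k, M k k) - M j j) := by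
  have key : ∀ τ : Equiv.Perm (Fin n),
      ∑ p, M (i.succAbove p) (j.succAbove (τ p))
        < (((∑ k, M k k) - M i i) + ((∑ k, M k k) - M j j)) / 2 := by
    intro τ
    obtain ⟨p₀, hp₀⟩ := Fin.exists_succAbove_eq (Ne.symm hij)
    have h1 : ∑ p, (2 * M (i.succAbove p) (j.succAbove (τ p)))
        < ∑ p, (M (i.succAbove p) (i.succAbove p)
            + M (j.succAbove (τ p)) (j.succAbove (τ p))) := by
      apply Finset.sum_lt_sum
      · intro p _
        rcases eq_or_ne (i.succAbove p) (j.succAbove (τ p)) with he | he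
        · rw [he]; linarith
        · exact (hM _ _ he).le
      · refine ⟨p₀, Finset.mem_univ _, ?_⟩
        apply hM
        rw [hp₀]
        exact (Fin.succAbove_ne j (τ p₀)).symm
    have h2 : ∑ p, M (j.succAbove (τ p)) (j.succAbove (τ p))
        = ∑ p, M (j.succAbove p) (j.succAbove p) :=
      Equiv.sum_comp τ (fun p => M (j.succAbove p) (j.succAbove p))
    rw [Finset.sum_add_distrib, h2, sum_succAbove_diag M i, sum_succAbove_diag M j,
      ← Finset.mul_sum] at h1
    linarith
  have := Finset.sup'_lt_iff (s := (Finset.univ : Finset (Equiv.Perm (Fin n))))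
    (H := Finset.univ_nonempty)
    (f := fun τ : Equiv.Perm (Fin n) => ∑ p, M (i.succAbove p) (j.succAbove (τ p)))
    (a := (((∑ k, M k k) - M i i) + ((∑ k, M k k) - M j j)) / 2)
  have hlt : tropMinor M i j
      < (((∑ k, M k k) - M i i) + ((∑ k, M k k) - M j j)) / 2 := by
    rw [tropMinor, tropDet]
    exact this.mpr fun τ _ => key τ
  linarith

lemma tropCond_tropAdj {n : ℕ} {M : Matrix (Fin (n + 1)) (Fin (n + 1)) ℝ}
    (hM : TropCond M) : TropCond (tropAdj M) := by
  intro i j hij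
  have h1 := tropMinor_lt hM hij
  have h2 := tropMinor_diag hM i
  have h3 := tropMinor_diag hM j
  simp only [tropAdj]
  rw [h2, h3]
  linarith

/-- For a symmetric matrix `A` of size `m + 1` (`m ≥ 1`) with
`2 * A i j < A i i + A j j` for all `i ≠ j`, the principal tropical minors of
the tropical adjoint are `A i i` plus `(size − 2)` times the trace. -/
theorem lifting_constant_of_double_dual {m : ℕ} (hm : 1 ≤ m)
    (A : Matrix (Fin (m + 1)) (Fin (m + 1)) ℝ) (hsym : A.IsSymm)
    (h : ∀ i j : Fin (m + 1), i ≠ j → 2 * A i j < A i i + A j j) :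
    ∀ i : Fin (m + 1),
      tropMinor (tropAdj A) i i = A i i + ((m : ℝ) - 1) * ∑ l, A l l := by
  intro i
  have hA : TropCond A := h
  have hB : TropCond (tropAdj A) := tropCond_tropAdj hA
  rw [tropMinor_diag hB i]
  have hdiag : ∀ k : Fin (m + 1), tropAdj A k k = (∑ l, A l l) - A k k := by
    intro k; exact tropMinor_diag hA k
  have hsum : ∑ k, tropAdj A k k = ∑ k, ((∑ l, A l l) - A k k) :=
    Finset.sum_congr rfl fun k _ => hdiag k
  rw [hsum, hdiag i, Finset.sum_sub_distrib, Finset.sum_const]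
  simp only [Finset.card_univ, Fintype.card_fin, nsmul_eq_mul]
  push_cast
  ring
end
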